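/- If G and H are connected graphs of orders n, m ≥ 3 respectively, then max{Δ(H)+n, Δ(G)+m} ≤ χ'_D(G+H) ≤ max{χ'_D(G), χ'_D(H)} + χ'_D(K_{n,m}). -/

import Mathlib

open SimpleGraph



/-- Two edges (as unordered pairs) are adjacent if they are distinct and share an endpoint. -/
def EdgesAdj {V : Type*} (e f : Sym2 V) : Prop := e ≠ f ∧ ∃ v, v ∈ e ∧ v ∈ f

/-- A proper edge labeling: adjacent edges of `G` receive different labels. -/
def IsProperEdgeLabeling {V : Type*} (G : SimpleGraph V) (c : Sym2 V → ℕ) : Prop :=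
  ∀ e ∈ G.edgeSet, ∀ f ∈ G.edgeSet, EdgesAdj e f → c e ≠ c f

/-- An automorphism `φ` of `G` preserves the edge labeling `c`. -/
def PreservesEdgeLabeling {V : Type*} (G : SimpleGraph V) (φ : G ≃g G) (c : Sym2 V → ℕ) : Prop :=
  ∀ e ∈ G.edgeSet, c (Sym2.map φ e) = c e

/-- A distinguishing edge labeling: only the identity automorphism preserves it. -/
def IsDistinguishingEdgeLabeling {V : Type*} (G : SimpleGraph V) (c : Sym2 V → ℕ) : Prop :=
  ∀ φ : G ≃g G, PreservesEdgeLabeling G φ c → ∀ v, φ v = v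

/-- The chromatic index `χ'(G)`. -/
noncomputable def chromIndex {V : Type*} (G : SimpleGraph V) : ℕ :=
  sInf {d | ∃ c : Sym2 V → ℕ, IsProperEdgeLabeling G c ∧ ∀ e ∈ G.edgeSet, c e < d}

/-- The distinguishing index `D'(G)`. -/
noncomputable def distIndex {V : Type*} (G : SimpleGraph V) : ℕ :=
  sInf {d | ∃ c : Sym2 V → ℕ, IsDistinguishingEdgeLabeling G c ∧ ∀ e ∈ G.edgeSet, c e < d}

/-- The distinguishing chromatic index `χ'_D(G)`. -/
noncomputable def distChromIndex {V : Type*} (G : SimpleGraph V) : ℕ :=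
  sInf {d | ∃ c : Sym2 V → ℕ, IsProperEdgeLabeling G c ∧ IsDistinguishingEdgeLabeling G c ∧
      ∀ e ∈ G.edgeSet, c e < d}

/-- The join `G + H` of two graphs. -/
def graphJoin {α β : Type*} (G : SimpleGraph α) (H : SimpleGraph β) : SimpleGraph (α ⊕ β) where
  Adj x y :=
    Sum.elim (fun a => Sum.elim (fun b => G.Adj a b) (fun _ => True) y)
             (fun a => Sum.elim (fun _ => True) (fun b => H.Adj a b) y) x
  symm := by refine ⟨?_⟩; rintro (a|a) (b|b) h
             · exact h.symm
             · trivial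
             · trivial
             · exact h.symm
  loopless := by refine ⟨?_⟩; rintro (a|a) h
                 · exact G.irrefl h
                 · exact H.irrefl h


lemma fix_of_fixEdges {V : Type*} [Fintype V] {J : SimpleGraph V} (hJ : J.Connected)
    (h3 : 3 ≤ Fintype.card V) (φ : J ≃g J) (hφ : ∀ e ∈ J.edgeSet, Sym2.map φ e = e) :
    ∀ v, φ v = v := by
  classical
  by_contra hc
  push_neg at hc
  obtain ⟨u, hu⟩ := hc
  have hune : ∃ x, J.Adj u x := by
    obtain ⟨v, hv⟩ : ∃ v : V, v ≠ u := Fintype.exists_ne_of_one_lt_card (by omega) u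
    obtain ⟨p⟩ := hJ.preconnected u v
    cases p with
    | nil => exact absurd rfl hv
    | cons h q => exact ⟨_, h⟩
  have key : ∀ x, J.Adj u x → φ u = x ∧ φ x = u := by
    intro x hx
    have he := hφ s(u, x) (J.mem_edgeSet.mpr hx)
    rw [Sym2.map_pair_eq, Sym2.eq_iff] at he
    rcases he with ⟨h1, h2⟩ | ⟨h1, h2⟩
    · exact absurd h1 hu
    · exact ⟨h1, h2⟩
  obtain ⟨x₀, hx₀⟩ := hune
  have hphiu : φ u = x₀ := (key x₀ hx₀).1
  have hphix : φ x₀ = u := (key x₀ hx₀).2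
  have keyx : ∀ y, J.Adj x₀ y → y = u := by
    intro y hy
    have he := hφ s(x₀, y) (J.mem_edgeSet.mpr hy)
    rw [Sym2.map_pair_eq, hphix, Sym2.eq_iff] at he
    rcases he with ⟨h1, h2⟩ | ⟨h1, h2⟩
    · exact absurd h1 hx₀.ne
    · exact h1.symm
  have keyu : ∀ y, J.Adj u y → y = x₀ := by
    intro y hy
    have := (key y hy).1
    rw [hphiu] at this
    exact this.symm
  have closed : ∀ a, (a = u ∨ a = x₀) → ∀ b, J.Adj a b → (b = u ∨ b = x₀) := by
    rintro a (rfl | rfl) b hb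
    · exact Or.inr (keyu b hb)
    · exact Or.inl (keyx b hb)
  have walkstay : ∀ {x w : V} (p : J.Walk x w), (x = u ∨ x = x₀) → (w = u ∨ w = x₀) := by
    intro x w p
    induction p with
    | nil => exact id
    | cons h q ih => intro hx; exact ih (closed _ hx _ h)
  have h2 : ∃ z : V, z ≠ u ∧ z ≠ x₀ := by
    by_contra h
    push_neg at h
    have hsub : (Finset.univ : Finset V) ⊆ {u, x₀} := by
      intro z _
      rcases eq_or_ne z u with rfl | hz
      · simp
      · simp [h z hz]
    have := Finset.card_le_card hsub
    have h2 : ({u, x₀} : Finset V).card ≤ 2 := by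
      apply le_trans (Finset.card_insert_le _ _); simp
    rw [Finset.card_univ] at this
    omega
  obtain ⟨z, hz1, hz2⟩ := h2
  obtain ⟨p⟩ := hJ.preconnected u z
  rcases walkstay p (Or.inl rfl) with rfl | rfl
  · exact hz1 rfl
  · exact hz2 rfl

lemma exists_dci {V : Type*} [Fintype V] (J : SimpleGraph V) (hJ : J.Connected)
    (h3 : 3 ≤ Fintype.card V) :
    ∃ c : Sym2 V → ℕ, IsProperEdgeLabeling J c ∧ IsDistinguishingEdgeLabeling J c ∧
      ∀ e ∈ J.edgeSet, c e < distChromIndex J := by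
  classical
  have hne : {d | ∃ c : Sym2 V → ℕ, IsProperEdgeLabeling J c ∧ IsDistinguishingEdgeLabeling J c ∧
      ∀ e ∈ J.edgeSet, c e < d}.Nonempty := by
    refine ⟨Fintype.card (Sym2 V), fun e => (Fintype.equivFin (Sym2 V) e : ℕ), ?_, ?_, ?_⟩
    · intro e _ f _ hef h
      exact hef.1 ((Fintype.equivFin (Sym2 V)).injective (Fin.val_injective h))
    · intro φ hp
      apply fix_of_fixEdges hJ h3 φ
      intro e he
      exact (Fintype.equivFin (Sym2 V)).injective (Fin.val_injective (hp e he))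
    · intro e _
      exact (Fintype.equivFin (Sym2 V) e).isLt
  exact Nat.sInf_mem hne

lemma conn_of_cross {γ δ : Type*} [Nonempty γ] [Nonempty δ] (J : SimpleGraph (γ ⊕ δ))
    (h : ∀ a b, J.Adj (Sum.inl a) (Sum.inr b)) : J.Connected := by
  refine ⟨?_⟩
  rintro (a | b) (a' | b')
  · obtain ⟨d⟩ := ‹Nonempty δ›
    exact ((h a d).reachable).trans ((h a' d).symm.reachable)
  · exact (h a b').reachable
  · exact ((h a' b).reachable).symm
  · obtain ⟨g⟩ := ‹Nonempty γ›
    exact ((h g b).symm.reachable).trans ((h g b').reachable)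

lemma graphJoin_adj_ll {α β : Type*} (G : SimpleGraph α) (H : SimpleGraph β) (a a' : α) :
    (graphJoin G H).Adj (Sum.inl a) (Sum.inl a') ↔ G.Adj a a' := Iff.rfl

lemma graphJoin_adj_rr {α β : Type*} (G : SimpleGraph α) (H : SimpleGraph β) (b b' : β) :
    (graphJoin G H).Adj (Sum.inr b) (Sum.inr b') ↔ H.Adj b b' := Iff.rfl

lemma graphJoin_adj_lr {α β : Type*} (G : SimpleGraph α) (H : SimpleGraph β) (a : α) (b : β) :
    (graphJoin G H).Adj (Sum.inl a) (Sum.inr b) := trivial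

noncomputable def jl {α β γ δ : Type*} (A : ℕ) (cG : Sym2 α → ℕ) (cH : Sym2 β → ℕ)
    (cK : Sym2 (γ ⊕ δ) → ℕ) (eα : α ≃ γ) (eβ : β ≃ δ) : Sym2 (α ⊕ β) → ℕ :=
  Sym2.lift ⟨fun x y => Sum.elim
      (fun a => Sum.elim (fun a' => cG s(a, a'))
        (fun b => A + cK s(Sum.inl (eα a), Sum.inr (eβ b))) y)
      (fun b => Sum.elim (fun a => A + cK s(Sum.inl (eα a), Sum.inr (eβ b)))
        (fun b' => cH s(b, b')) y) x, by
    rintro (a | b) (a' | b') <;> simp only [Sum.elim_inl, Sum.elim_inr]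
    · rw [Sym2.eq_swap]
    · rw [Sym2.eq_swap]⟩

lemma jl_ll {α β γ δ : Type*} (A : ℕ) (cG : Sym2 α → ℕ) (cH : Sym2 β → ℕ)
    (cK : Sym2 (γ ⊕ δ) → ℕ) (eα : α ≃ γ) (eβ : β ≃ δ) (a a' : α) :
    jl A cG cH cK eα eβ s(Sum.inl a, Sum.inl a') = cG s(a, a') := rfl

lemma jl_rr {α β γ δ : Type*} (A : ℕ) (cG : Sym2 α → ℕ) (cH : Sym2 β → ℕ)
    (cK : Sym2 (γ ⊕ δ) → ℕ) (eα : α ≃ γ) (eβ : β ≃ δ) (b b' : β) :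
    jl A cG cH cK eα eβ s(Sum.inr b, Sum.inr b') = cH s(b, b') := rfl

lemma jl_lr {α β γ δ : Type*} (A : ℕ) (cG : Sym2 α → ℕ) (cH : Sym2 β → ℕ)
    (cK : Sym2 (γ ⊕ δ) → ℕ) (eα : α ≃ γ) (eβ : β ≃ δ) (a : α) (b : β) :
    jl A cG cH cK eα eβ s(Sum.inl a, Sum.inr b) = A + cK s(Sum.inl (eα a), Sum.inr (eβ b)) := rfl

lemma jl_rl {α β γ δ : Type*} (A : ℕ) (cG : Sym2 α → ℕ) (cH : Sym2 β → ℕ)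
    (cK : Sym2 (γ ⊕ δ) → ℕ) (eα : α ≃ γ) (eβ : β ≃ δ) (a : α) (b : β) :
    jl A cG cH cK eα eβ s(Sum.inr b, Sum.inl a) = A + cK s(Sum.inl (eα a), Sum.inr (eβ b)) := rfl

lemma graphJoin_edge_cases {α β : Type*} (G : SimpleGraph α) (H : SimpleGraph β) :
    ∀ e ∈ (graphJoin G H).edgeSet,
      (∃ a a', G.Adj a a' ∧ e = s(Sum.inl a, Sum.inl a')) ∨
      (∃ b b', H.Adj b b' ∧ e = s(Sum.inr b, Sum.inr b')) ∨
      (∃ a b, e = s(Sum.inl a, Sum.inr b)) := by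
  intro e he
  induction e using Sym2.ind with
  | _ x y =>
    rcases x with a | b <;> rcases y with a' | b'
    · exact Or.inl ⟨a, a', he, rfl⟩
    · exact Or.inr (Or.inr ⟨a, b', rfl⟩)
    · exact Or.inr (Or.inr ⟨a', b, Sym2.eq_swap⟩)
    · exact Or.inr (Or.inl ⟨b, b', he, rfl⟩)

theorem stmt15 {α β : Type*} [Fintype α] [Fintype β]
    (G : SimpleGraph α) (H : SimpleGraph β) [DecidableRel G.Adj] [DecidableRel H.Adj]
    (hG : G.Connected) (hH : H.Connected)
    (hn : 3 ≤ Fintype.card α) (hm : 3 ≤ Fintype.card β) :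
    max (H.maxDegree + Fintype.card α) (G.maxDegree + Fintype.card β) ≤
      distChromIndex (graphJoin G H) ∧
    distChromIndex (graphJoin G H) ≤
      max (distChromIndex G) (distChromIndex H) +
        distChromIndex (completeBipartiteGraph (Fin (Fintype.card α)) (Fin (Fintype.card β))) := by
  classical
  haveI hαne : Nonempty α := Fintype.card_pos_iff.mp (by omega)
  haveI hβne : Nonempty β := Fintype.card_pos_iff.mp (by omega)
  have hJconn : (graphJoin G H).Connected :=
    conn_of_cross _ (fun a b => graphJoin_adj_lr G H a b)
  have hJcard : 3 ≤ Fintype.card (α ⊕ β) := by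
    rw [Fintype.card_sum]; omega
  constructor
  · -- lower bound
    obtain ⟨c, hcp, _, hcb⟩ := exists_dci (graphJoin G H) hJconn hJcard
    set D := distChromIndex (graphJoin G H) with hD
    have edge_inj : ∀ e ∈ (graphJoin G H).edgeSet, ∀ f ∈ (graphJoin G H).edgeSet,
        (∃ v, v ∈ e ∧ v ∈ f) → c e = c f → e = f := by
      intro e he f hf hv hc
      by_contra hne
      exact hcp e he f hf ⟨hne, hv⟩ hc
    have hside1 : ∀ b : β, Fintype.card α + H.degree b ≤ D := by
      intro b
      have hF : ∀ a : α, c s(Sum.inr b, Sum.inl a) < D :=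
        fun a => hcb _ ((graphJoin G H).mem_edgeSet.mpr trivial)
      have hF2 : ∀ b', H.Adj b b' → c s(Sum.inr b, Sum.inr b') < D := by
        intro b' hb'
        exact hcb _ ((graphJoin G H).mem_edgeSet.mpr hb')
      have hmem1 : ∀ a : α, s(Sum.inr b, Sum.inl a) ∈ (graphJoin G H).edgeSet :=
        fun a => (graphJoin G H).mem_edgeSet.mpr trivial
      have hmem2 : ∀ b', H.Adj b b' → s(Sum.inr b, Sum.inr b') ∈ (graphJoin G H).edgeSet :=
        fun b' hb' => (graphJoin G H).mem_edgeSet.mpr hb'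
      let F : α ⊕ (H.neighborSet b) → Fin D :=
        Sum.elim (fun a => ⟨c s(Sum.inr b, Sum.inl a), hF a⟩)
          (fun b' => ⟨c s(Sum.inr b, Sum.inr b'.1), hF2 b'.1 b'.2⟩)
      have hFinj : Function.Injective F := by
        rintro (a | ⟨b', hb'⟩) (a' | ⟨b'', hb''⟩) h
        all_goals simp only [F, Sum.elim_inl, Sum.elim_inr, Fin.mk.injEq] at h
        · have := edge_inj _ (hmem1 a) _ (hmem1 a') ⟨Sum.inr b, by simp, by simp⟩ h
          rw [Sym2.eq_iff] at this
          rcases this with ⟨_, h2⟩ | ⟨h1, _⟩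
          · simp only [Sum.inl.injEq] at h2
            exact congrArg Sum.inl h2
          · simp at h1
        · have := edge_inj _ (hmem1 a) _ (hmem2 b'' hb'') ⟨Sum.inr b, by simp, by simp⟩ h
          rw [Sym2.eq_iff] at this
          rcases this with ⟨_, h2⟩ | ⟨h1, _⟩ <;> simp_all
        · have := edge_inj _ (hmem2 b' hb') _ (hmem1 a') ⟨Sum.inr b, by simp, by simp⟩ h
          rw [Sym2.eq_iff] at this
          rcases this with ⟨_, h2⟩ | ⟨h1, _⟩ <;> simp_all
        · have := edge_inj _ (hmem2 b' hb') _ (hmem2 b'' hb'') ⟨Sum.inr b, by simp, by simp⟩ h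
          rw [Sym2.eq_iff] at this
          rcases this with ⟨_, h2⟩ | ⟨h1, h2⟩
          · simp only [Sum.inr.injEq] at h2
            exact congrArg Sum.inr (Subtype.ext h2)
          · simp only [Sum.inr.injEq] at h1 h2
            exfalso
            rw [h2] at hb'
            exact H.irrefl hb'
      have hcard := Fintype.card_le_of_injective F hFinj
      rw [Fintype.card_sum, SimpleGraph.card_neighborSet_eq_degree, Fintype.card_fin] at hcard
      exact hcard
    have hside2 : ∀ a : α, Fintype.card β + G.degree a ≤ D := by
      intro a
      have hF : ∀ b : β, c s(Sum.inl a, Sum.inr b) < D :=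
        fun b => hcb _ ((graphJoin G H).mem_edgeSet.mpr trivial)
      have hF2 : ∀ a', G.Adj a a' → c s(Sum.inl a, Sum.inl a') < D := by
        intro a' ha'
        exact hcb _ ((graphJoin G H).mem_edgeSet.mpr ha')
      have hmem1 : ∀ b : β, s(Sum.inl a, Sum.inr b) ∈ (graphJoin G H).edgeSet :=
        fun b => (graphJoin G H).mem_edgeSet.mpr trivial
      have hmem2 : ∀ a', G.Adj a a' → s(Sum.inl a, Sum.inl a') ∈ (graphJoin G H).edgeSet :=
        fun a' ha' => (graphJoin G H).mem_edgeSet.mpr ha'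
      let F : β ⊕ (G.neighborSet a) → Fin D :=
        Sum.elim (fun b => ⟨c s(Sum.inl a, Sum.inr b), hF b⟩)
          (fun a' => ⟨c s(Sum.inl a, Sum.inl a'.1), hF2 a'.1 a'.2⟩)
      have hFinj : Function.Injective F := by
        rintro (b | ⟨a', ha'⟩) (b' | ⟨a'', ha''⟩) h
        all_goals simp only [F, Sum.elim_inl, Sum.elim_inr, Fin.mk.injEq] at h
        · have := edge_inj _ (hmem1 b) _ (hmem1 b') ⟨Sum.inl a, by simp, by simp⟩ h
          rw [Sym2.eq_iff] at this
          rcases this with ⟨_, h2⟩ | ⟨h1, _⟩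
          · simp only [Sum.inr.injEq] at h2
            exact congrArg Sum.inl h2
          · simp at h1
        · have := edge_inj _ (hmem1 b) _ (hmem2 a'' ha'') ⟨Sum.inl a, by simp, by simp⟩ h
          rw [Sym2.eq_iff] at this
          rcases this with ⟨_, h2⟩ | ⟨h1, _⟩ <;> simp_all
        · have := edge_inj _ (hmem2 a' ha') _ (hmem1 b') ⟨Sum.inl a, by simp, by simp⟩ h
          rw [Sym2.eq_iff] at this
          rcases this with ⟨_, h2⟩ | ⟨h1, _⟩ <;> simp_all
        · have := edge_inj _ (hmem2 a' ha') _ (hmem2 a'' ha'') ⟨Sum.inl a, by simp, by simp⟩ h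
          rw [Sym2.eq_iff] at this
          rcases this with ⟨_, h2⟩ | ⟨h1, h2⟩
          · simp only [Sum.inl.injEq] at h2
            exact congrArg Sum.inr (Subtype.ext h2)
          · simp only [Sum.inl.injEq] at h1 h2
            exfalso
            rw [h2] at ha'
            exact G.irrefl ha'
      have hcard := Fintype.card_le_of_injective F hFinj
      rw [Fintype.card_sum, SimpleGraph.card_neighborSet_eq_degree, Fintype.card_fin] at hcard
      exact hcard
    obtain ⟨b, hbmax⟩ := H.exists_maximal_degree_vertex
    obtain ⟨a, hamax⟩ := G.exists_maximal_degree_vertex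
    have h1 := hside1 b
    have h2 := hside2 a
    rw [← hbmax] at h1
    rw [← hamax] at h2
    exact max_le (by omega) (by omega)
  · -- upper bound
    set K := completeBipartiteGraph (Fin (Fintype.card α)) (Fin (Fintype.card β)) with hKdef
    have hKcross : ∀ (x : Fin (Fintype.card α)) (y : Fin (Fintype.card β)),
        K.Adj (Sum.inl x) (Sum.inr y) := by
      intro x y; simp [hKdef]
    haveI : Nonempty (Fin (Fintype.card α)) := ⟨⟨0, by omega⟩⟩
    haveI : Nonempty (Fin (Fintype.card β)) := ⟨⟨0, by omega⟩⟩
    have hKconn : K.Connected := conn_of_cross _ hKcross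
    have hKcard : 3 ≤ Fintype.card (Fin (Fintype.card α) ⊕ Fin (Fintype.card β)) := by
      rw [Fintype.card_sum]; simp; omega
    obtain ⟨cG, hGp, hGd, hGb⟩ := exists_dci G hG hn
    obtain ⟨cH, hHp, hHd, hHb⟩ := exists_dci H hH hm
    obtain ⟨cK, hKp, hKd, hKb⟩ := exists_dci K hKconn hKcard
    set A := max (distChromIndex G) (distChromIndex H) with hA
    set B := distChromIndex K with hB
    set eα := Fintype.equivFin α with heα
    set eβ := Fintype.equivFin β with heβ
    set c := jl A cG cH cK eα eβ with hc
    have hGA : ∀ e ∈ G.edgeSet, cG e < A :=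
      fun e he => lt_of_lt_of_le (hGb e he) (le_max_left _ _)
    have hHA : ∀ e ∈ H.edgeSet, cH e < A :=
      fun e he => lt_of_lt_of_le (hHb e he) (le_max_right _ _)
    have hKmem : ∀ x y, s(Sum.inl x, Sum.inr y) ∈ K.edgeSet :=
      fun x y => K.mem_edgeSet.mpr (hKcross x y)
    have hcp : IsProperEdgeLabeling (graphJoin G H) c := by
      rintro e he f hf ⟨hne, v, hve, hvf⟩
      rcases graphJoin_edge_cases G H e he with
          ⟨a1, a2, hadj1, rfl⟩ | ⟨b1, b2, hadj1, rfl⟩ | ⟨a1, b1, rfl⟩ <;>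
        rcases graphJoin_edge_cases G H f hf with
          ⟨a3, a4, hadj2, rfl⟩ | ⟨b3, b4, hadj2, rfl⟩ | ⟨a3, b3, rfl⟩
      · rw [hc, jl_ll, jl_ll]
        apply hGp _ (G.mem_edgeSet.mpr hadj1) _ (G.mem_edgeSet.mpr hadj2)
        constructor
        · intro hq
          apply hne
          have := congrArg (Sym2.map (Sum.inl : α → α ⊕ β)) hq
          simpa [Sym2.map_pair_eq] using this
        · rcases Sym2.mem_iff.mp hve with rfl | rfl <;>
            rcases Sym2.mem_iff.mp hvf with h | h
          · exact ⟨a1, by simp, by rw [Sym2.mem_iff]; exact Or.inl (Sum.inl.inj h)⟩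
          · exact ⟨a1, by simp, by rw [Sym2.mem_iff]; exact Or.inr (Sum.inl.inj h)⟩
          · exact ⟨a2, by simp, by rw [Sym2.mem_iff]; exact Or.inl (Sum.inl.inj h)⟩
          · exact ⟨a2, by simp, by rw [Sym2.mem_iff]; exact Or.inr (Sum.inl.inj h)⟩
      · rcases Sym2.mem_iff.mp hve with rfl | rfl <;>
          rcases Sym2.mem_iff.mp hvf with h | h <;> simp_all
      · rw [hc, jl_ll, jl_lr]
        have := hGA _ (G.mem_edgeSet.mpr hadj1)
        omega
      · rcases Sym2.mem_iff.mp hve with rfl | rfl <;>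
          rcases Sym2.mem_iff.mp hvf with h | h <;> simp_all
      · rw [hc, jl_rr, jl_rr]
        apply hHp _ (H.mem_edgeSet.mpr hadj1) _ (H.mem_edgeSet.mpr hadj2)
        constructor
        · intro hq
          apply hne
          have := congrArg (Sym2.map (Sum.inr : β → α ⊕ β)) hq
          simpa [Sym2.map_pair_eq] using this
        · rcases Sym2.mem_iff.mp hve with rfl | rfl <;>
            rcases Sym2.mem_iff.mp hvf with h | h
          · exact ⟨b1, by simp, by rw [Sym2.mem_iff]; exact Or.inl (Sum.inr.inj h)⟩
          · exact ⟨b1, by simp, by rw [Sym2.mem_iff]; exact Or.inr (Sum.inr.inj h)⟩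
          · exact ⟨b2, by simp, by rw [Sym2.mem_iff]; exact Or.inl (Sum.inr.inj h)⟩
          · exact ⟨b2, by simp, by rw [Sym2.mem_iff]; exact Or.inr (Sum.inr.inj h)⟩
      · rw [hc, jl_rr, jl_lr]
        have := hHA _ (H.mem_edgeSet.mpr hadj1)
        omega
      · rw [hc, jl_lr, jl_ll]
        have := hGA _ (G.mem_edgeSet.mpr hadj2)
        omega
      · rw [hc, jl_lr, jl_rr]
        have := hHA _ (H.mem_edgeSet.mpr hadj2)
        omega
      · rw [hc, jl_lr, jl_lr]
        have key : cK s(Sum.inl (eα a1), Sum.inr (eβ b1)) ≠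
            cK s(Sum.inl (eα a3), Sum.inr (eβ b3)) := by
          apply hKp _ (hKmem _ _) _ (hKmem _ _)
          constructor
          · intro hq
            rw [Sym2.eq_iff] at hq
            rcases hq with ⟨h1, h2⟩ | ⟨h1, h2⟩
            · apply hne
              rw [Sum.inl.injEq] at h1
              rw [Sum.inr.injEq] at h2
              rw [eα.injective h1, eβ.injective h2]
            · simp at h1
          · rcases Sym2.mem_iff.mp hve with rfl | rfl <;>
              rcases Sym2.mem_iff.mp hvf with h | h
            · exact ⟨Sum.inl (eα a1), by simp,
                by rw [Sym2.mem_iff]; exact Or.inl (by rw [Sum.inl.inj h])⟩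
            · simp at h
            · simp at h
            · exact ⟨Sum.inr (eβ b1), by simp,
                by rw [Sym2.mem_iff]; exact Or.inr (by rw [Sum.inr.inj h])⟩
        exact fun hq => key (Nat.add_left_cancel hq)
    have hcb : ∀ e ∈ (graphJoin G H).edgeSet, c e < A + B := by
      intro e he
      rcases graphJoin_edge_cases G H e he with
          ⟨a1, a2, hadj, rfl⟩ | ⟨b1, b2, hadj, rfl⟩ | ⟨a1, b1, rfl⟩
      · rw [hc, jl_ll]
        have := hGA _ (G.mem_edgeSet.mpr hadj)
        omega
      · rw [hc, jl_rr]
        have := hHA _ (H.mem_edgeSet.mpr hadj)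
        omega
      · rw [hc, jl_lr]
        have := hKb _ (hKmem (eα a1) (eβ b1))
        omega
    have hcd : IsDistinguishingEdgeLabeling (graphJoin G H) c := by
      intro φ hpres
      have sides : ∀ (a : α) (b : β),
          ((∃ a', φ (Sum.inl a) = Sum.inl a') ∧ (∃ b', φ (Sum.inr b) = Sum.inr b')) ∨
          ((∃ b', φ (Sum.inl a) = Sum.inr b') ∧ (∃ a', φ (Sum.inr b) = Sum.inl a')) := by
        intro a b
        have hmem : s(Sum.inl a, Sum.inr b) ∈ (graphJoin G H).edgeSet :=
          (graphJoin G H).mem_edgeSet.mpr trivial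
        have hlab := hpres _ hmem
        rw [Sym2.map_pair_eq] at hlab
        have hadj : (graphJoin G H).Adj (φ (Sum.inl a)) (φ (Sum.inr b)) :=
          φ.map_adj_iff.mpr trivial
        rcases hx : φ (Sum.inl a) with a1 | b1 <;> rcases hy : φ (Sum.inr b) with a2 | b2
        · exfalso
          rw [hx, hy] at hlab hadj
          rw [hc, jl_ll, jl_lr] at hlab
          have := hGA _ (G.mem_edgeSet.mpr hadj)
          omega
        · exact Or.inl ⟨⟨a1, rfl⟩, ⟨b2, rfl⟩⟩
        · exact Or.inr ⟨⟨b1, rfl⟩, ⟨a2, rfl⟩⟩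
        · exfalso
          rw [hx, hy] at hlab hadj
          rw [hc, jl_rr, jl_lr] at hlab
          have := hHA _ (H.mem_edgeSet.mpr hadj)
          omega
      obtain ⟨a₀⟩ := hαne
      obtain ⟨b₀⟩ := hβne
      rcases sides a₀ b₀ with ⟨⟨a₀', ha₀⟩, ⟨b₀', hb₀⟩⟩ | ⟨⟨b₀', ha₀⟩, ⟨a₀', hb₀⟩⟩
      · -- side-preserving case
        have hL : ∀ a : α, ∃ a', φ (Sum.inl a) = Sum.inl a' := by
          intro a
          rcases sides a b₀ with ⟨h1, _⟩ | ⟨_, ⟨a2, h2⟩⟩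
          · exact h1
          · rw [hb₀] at h2; simp at h2
        have hR : ∀ b : β, ∃ b', φ (Sum.inr b) = Sum.inr b' := by
          intro b
          rcases sides a₀ b with ⟨_, h1⟩ | ⟨⟨b2, h2⟩, _⟩
          · exact h1
          · rw [ha₀] at h2; simp at h2
        choose g hg using hL
        choose k hk using hR
        have hginj : Function.Injective g := by
          intro x y hxy
          have : φ (Sum.inl x) = φ (Sum.inl y) := by rw [hg, hg, hxy]
          exact Sum.inl.inj (φ.injective this)
        have hkinj : Function.Injective k := by
          intro x y hxy
          have : φ (Sum.inr x) = φ (Sum.inr y) := by rw [hk, hk, hxy]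
          exact Sum.inr.inj (φ.injective this)
        let ψ : G ≃g G := ⟨Equiv.ofBijective g (Finite.injective_iff_bijective.mp hginj), by
          intro x y
          show G.Adj (g x) (g y) ↔ G.Adj x y
          have := φ.map_adj_iff (v := Sum.inl x) (w := Sum.inl y)
          rw [hg, hg] at this
          exact this⟩
        let χ : H ≃g H := ⟨Equiv.ofBijective k (Finite.injective_iff_bijective.mp hkinj), by
          intro x y
          show H.Adj (k x) (k y) ↔ H.Adj x y
          have := φ.map_adj_iff (v := Sum.inr x) (w := Sum.inr y)
          rw [hk, hk] at this
          exact this⟩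
        have hψpres : PreservesEdgeLabeling G ψ cG := by
          intro e he
          induction e using Sym2.ind with
          | _ x y =>
            have hadj : G.Adj x y := G.mem_edgeSet.mp he
            have hp := hpres _ ((graphJoin G H).mem_edgeSet.mpr ((graphJoin_adj_ll G H x y).mpr hadj))
            rw [Sym2.map_pair_eq, hg, hg, hc, jl_ll, jl_ll] at hp
            rw [Sym2.map_pair_eq]
            exact hp
        have hχpres : PreservesEdgeLabeling H χ cH := by
          intro e he
          induction e using Sym2.ind with
          | _ x y =>
            have hadj : H.Adj x y := H.mem_edgeSet.mp he
            have hp := hpres _ ((graphJoin G H).mem_edgeSet.mpr ((graphJoin_adj_rr G H x y).mpr hadj))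
            rw [Sym2.map_pair_eq, hk, hk, hc, jl_rr, jl_rr] at hp
            rw [Sym2.map_pair_eq]
            exact hp
        have hgid := hGd ψ hψpres
        have hkid := hHd χ hχpres
        rintro (a | b)
        · rw [hg a]
          exact congrArg Sum.inl (hgid a)
        · rw [hk b]
          exact congrArg Sum.inr (hkid b)
      · -- side-swapping case: contradiction
        exfalso
        have hL : ∀ a : α, ∃ b', φ (Sum.inl a) = Sum.inr b' := by
          intro a
          rcases sides a b₀ with ⟨_, ⟨b2, h2⟩⟩ | ⟨h1, _⟩
          · rw [hb₀] at h2; simp at h2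
          · exact h1
        have hR : ∀ b : β, ∃ a', φ (Sum.inr b) = Sum.inl a' := by
          intro b
          rcases sides a₀ b with ⟨⟨a2, h2⟩, _⟩ | ⟨_, h1⟩
          · rw [ha₀] at h2; simp at h2
          · exact h1
        choose g hg using hL
        choose k hk using hR
        have hginj : Function.Injective g := by
          intro x y hxy
          have : φ (Sum.inl x) = φ (Sum.inl y) := by rw [hg, hg, hxy]
          exact Sum.inl.inj (φ.injective this)
        let F : Fin (Fintype.card α) ⊕ Fin (Fintype.card β) →
            Fin (Fintype.card α) ⊕ Fin (Fintype.card β) :=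
          Sum.elim (fun x => Sum.inr (eβ (g (eα.symm x)))) (fun y => Sum.inl (eα (k (eβ.symm y))))
        have hkinj : Function.Injective k := by
          intro x y hxy
          have : φ (Sum.inr x) = φ (Sum.inr y) := by rw [hk, hk, hxy]
          exact Sum.inr.inj (φ.injective this)
        have hFinj : Function.Injective F := by
          rintro (x | y) (x' | y') h <;> simp only [F, Sum.elim_inl, Sum.elim_inr] at h
          · rw [Sum.inr.injEq] at h
            exact congrArg Sum.inl (eα.symm.injective (hginj (eβ.injective h)))
          · exact absurd h (by simp)
          · exact absurd h (by simp)
          · rw [Sum.inl.injEq] at h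
            exact congrArg Sum.inr (eβ.symm.injective (hkinj (eα.injective h)))
        let Ψ : K ≃g K := ⟨Equiv.ofBijective F (Finite.injective_iff_bijective.mp hFinj), by
          intro u v
          rcases u with x | y <;> rcases v with x' | y' <;>
            simp [F, hKdef, Equiv.ofBijective]⟩
        have key : ∀ (x : Fin (Fintype.card α)) (y : Fin (Fintype.card β)),
            cK (Sym2.map Ψ s(Sum.inl x, Sum.inr y)) = cK s(Sum.inl x, Sum.inr y) := by
          intro x y
          have hmem : s(Sum.inl (eα.symm x), Sum.inr (eβ.symm y)) ∈ (graphJoin G H).edgeSet :=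
            (graphJoin G H).mem_edgeSet.mpr trivial
          have hp := hpres _ hmem
          rw [Sym2.map_pair_eq, hg, hk, hc, jl_rl, jl_lr] at hp
          rw [eα.apply_symm_apply, eβ.apply_symm_apply] at hp
          have hp' := Nat.add_left_cancel hp
          rw [Sym2.map_pair_eq]
          show cK s(Sum.inr (eβ (g (eα.symm x))), Sum.inl (eα (k (eβ.symm y)))) = _
          rw [Sym2.eq_swap]
          exact hp'
        have hΨpres : PreservesEdgeLabeling K Ψ cK := by
          intro e he
          induction e using Sym2.ind with
          | _ u v =>
            rcases u with x | y <;> rcases v with x' | y'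
            · rw [SimpleGraph.mem_edgeSet] at he
              simp [hKdef] at he
            · exact key x y'
            · rw [show (s(Sum.inr y, Sum.inl x') : Sym2 (Fin (Fintype.card α) ⊕ Fin (Fintype.card β))) = s(Sum.inl x', Sum.inr y) from Sym2.eq_swap] at he ⊢
              exact key x' y
            · rw [SimpleGraph.mem_edgeSet] at he
              simp [hKdef] at he
        have hΨid := hKd Ψ hΨpres
        obtain ⟨x⟩ := ‹Nonempty (Fin (Fintype.card α))›
        have h2 : (Sum.inr (eβ (g (eα.symm x))) : Fin (Fintype.card α) ⊕ Fin (Fintype.card β)) =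
            Sum.inl x := hΨid (Sum.inl x)
        simp at h2
    exact Nat.sInf_le ⟨c, hcp, hcd, hcb⟩
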